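/- In the one-relation semigroup S presented by ⟨a, b | abab²ab = b⟩ (the quotient of the free semigroup on {a, b} by the congruence generated by the pair (abab²ab, b)), the images of the words ab²a²b² and b are distinct elements of S. -/

import Mathlib

/-- The generator `a` of the free semigroup on the two-element alphabet. -/
def wa : FreeSemigroup (Fin 2) := FreeSemigroup.of 0

/-- The generator `b` of the free semigroup on the two-element alphabet. -/
def wb : FreeSemigroup (Fin 2) := FreeSemigroup.of 1

/-- The smallest semigroup congruence on the free semigroup on `{a, b}` identifying the
words `abab²ab` and `b`; its quotient is the one-relation semigroup
`⟨a, b | abab²ab = b⟩`. -/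
def rel : Con (FreeSemigroup (Fin 2)) :=
  conGen (fun x y => x = wa * wb * wa * wb * wb * wa * wb ∧ y = wb)


namespace S17

abbrev LB := List Bool
def r1 : LB := [false,true,false,true,true,false,true]
def r2 : LB := [false,true,false,true,true,true]
def Normal (l : LB) : Prop := ¬ (r1 <:+: l) ∧ ¬ (r2 <:+: l)

def fC : LB → LB
  | false :: true :: true :: false :: true :: t => true :: t
  | false :: true :: true :: true :: t => true :: false :: true :: true :: fC t
  | s => false :: true :: s

def fA : LB → LB
  | true :: false :: true :: true :: false :: true :: t => true :: t
  | true :: false :: true :: true :: true :: t => true :: false :: true :: true :: fC t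
  | w => false :: w

def fB (l : LB) : LB := true :: l

lemma fC_default {s : LB} (h1 : ¬ [false,true,true,false,true] <+: s)
    (h2 : ¬ [false,true,true,true] <+: s) : fC s = false :: true :: s := by
  rw [fC.eq_def]; split
  · exact absurd ⟨_, rfl⟩ h1
  · exact absurd ⟨_, rfl⟩ h2
  · rfl

lemma fA_default {w : LB} (h1 : ¬ [true,false,true,true,false,true] <+: w)
    (h2 : ¬ [true,false,true,true,true] <+: w) : fA w = false :: w := by
  rw [fA.eq_def]; split
  · exact absurd ⟨_, rfl⟩ h1
  · exact absurd ⟨_, rfl⟩ h2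
  · rfl

lemma Normal.tail {c : Bool} {l : LB} (h : Normal (c :: l)) : Normal l :=
  ⟨fun hh => h.1 (hh.trans (List.suffix_cons c l).isInfix),
   fun hh => h.2 (hh.trans (List.suffix_cons c l).isInfix)⟩

lemma normal_fB {l : LB} (h : Normal l) : Normal (fB l) := by
  obtain ⟨h1, h2⟩ := h
  constructor <;> intro hh <;> rcases List.infix_cons_iff.mp hh with hp | hi
  · simp [r1, List.cons_prefix_cons] at hp
  · exact h1 hi
  · simp [r2, List.cons_prefix_cons] at hp
  · exact h2 hi

lemma normal_babb {Y : LB} (h : Normal Y) : Normal (true::false::true::true::Y) := by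
  obtain ⟨h1, h2⟩ := h
  refine ⟨fun hh => ?_, fun hh => ?_⟩ <;>
  · simp only [r1, r2, List.infix_cons_iff, List.cons_prefix_cons] at hh
    simp_all [r1, r2]

lemma normal_ab {s : LB} (h : Normal s) (h1 : ¬ [false,true,true,false,true] <+: s)
    (h2 : ¬ [false,true,true,true] <+: s) : Normal (false::true::s) := by
  obtain ⟨n1, n2⟩ := h
  refine ⟨fun hh => ?_, fun hh => ?_⟩ <;>
  · simp only [r1, r2, List.infix_cons_iff, List.cons_prefix_cons] at hh
    simp_all [r1, r2]

lemma normal_a {w : LB} (h : Normal w) (h1 : ¬ [true,false,true,true,false,true] <+: w)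
    (h2 : ¬ [true,false,true,true,true] <+: w) : Normal (false::w) := by
  obtain ⟨n1, n2⟩ := h
  refine ⟨fun hh => ?_, fun hh => ?_⟩ <;>
  · simp only [r1, r2, List.infix_cons_iff, List.cons_prefix_cons] at hh
    simp_all [r1, r2]

/-- `fC` preserves normality; moreover its output never starts with `a` (`false`). -/
lemma normal_fC : ∀ s : LB, Normal s → Normal (fC s)
  | false :: true :: true :: false :: true :: t, h => by
      rw [show fC (false::true::true::false::true::t) = true :: t from rfl]
      exact normal_fB h.tail.tail.tail.tail.tail
  | false :: true :: true :: true :: t, h => by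
      rw [show fC (false::true::true::true::t) = true::false::true::true::fC t from rfl]
      exact normal_babb (normal_fC t h.tail.tail.tail.tail)
  | s, h => by
      by_cases h1 : [false,true,true,false,true] <+: s
      · obtain ⟨t, rfl⟩ := h1
        show Normal (fC (false::true::true::false::true::t))
        rw [show fC (false::true::true::false::true::t) = true :: t from rfl]
        exact normal_fB h.tail.tail.tail.tail.tail
      by_cases h2 : [false,true,true,true] <+: s
      · obtain ⟨t, rfl⟩ := h2
        show Normal (fC (false::true::true::true::t))
        rw [show fC (false::true::true::true::t) = true::false::true::true::fC t from rfl]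
        exact normal_babb (normal_fC t h.tail.tail.tail.tail)
      · rw [fC_default h1 h2]
        exact normal_ab h h1 h2
  termination_by s => s.length

lemma normal_fA {w : LB} (h : Normal w) : Normal (fA w) := by
  rcases hw1 : decide ([true,false,true,true,false,true] <+: w) with _ | _
  · rcases hw2 : decide ([true,false,true,true,true] <+: w) with _ | _
    · rw [fA_default (by simpa using hw1) (by simpa using hw2)]
      exact normal_a h (by simpa using hw1) (by simpa using hw2)
    · obtain ⟨t, rfl⟩ := decide_eq_true_iff.mp hw2
      show Normal (fA (true::false::true::true::true::t))
      rw [show fA (true::false::true::true::true::t) = true::false::true::true::fC t from rfl]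
      exact normal_babb (normal_fC t h.tail.tail.tail.tail.tail)
  · obtain ⟨t, rfl⟩ := decide_eq_true_iff.mp hw1
    show Normal (fA (true::false::true::true::false::true::t))
    rw [show fA (true::false::true::true::false::true::t) = true :: t from rfl]
    exact normal_fB h.tail.tail.tail.tail.tail.tail

end S17

namespace S17

lemma dagger : ∀ t : LB, Normal t → fC (false::true::true:: fC t) = true :: t
  | false::true::true::false::true::u, h => by
      show fC (false::true::true::true::u) = _
      rw [show fC (false::true::true::true::u) = true::false::true::true::fC u from rfl]
      rw [fC_default (fun hp => by obtain ⟨v, rfl⟩ := hp; exact h.1 ⟨[false,true,true], v, rfl⟩)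
          (fun hp => by obtain ⟨v, rfl⟩ := hp; exact h.2 ⟨[false,true,true], v, rfl⟩)]
  | false::true::true::true::u, h => by
      show fC (false::true::true::true::(false::true::true::fC u)) = _
      rw [show fC (false::true::true::true::(false::true::true::fC u))
            = true::false::true::true::fC (false::true::true::fC u) from rfl]
      rw [dagger u h.tail.tail.tail.tail]
  | t, h => by
      by_cases h1 : [false,true,true,false,true] <+: t
      · obtain ⟨u, rfl⟩ := h1
        show fC (false::true::true::true::u) = _
        rw [show fC (false::true::true::true::u) = true::false::true::true::fC u from rfl]
        rw [fC_default (fun hp => by obtain ⟨v, rfl⟩ := hp; exact h.1 ⟨[false,true,true], v, rfl⟩)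
            (fun hp => by obtain ⟨v, rfl⟩ := hp; exact h.2 ⟨[false,true,true], v, rfl⟩)]
        rfl
      by_cases h2 : [false,true,true,true] <+: t
      · obtain ⟨u, rfl⟩ := h2
        show fC (false::true::true::true::(false::true::true::fC u)) = _
        rw [show fC (false::true::true::true::(false::true::true::fC u))
              = true::false::true::true::fC (false::true::true::fC u) from rfl]
        rw [dagger u h.tail.tail.tail.tail]
        rfl
      · rw [fC_default h1 h2]
        rfl
  termination_by t => t.length

end S17

namespace S17

lemma key (x : LB) (hx : Normal x) :
    fA (fB (fA (fB (fB (fA (fB x)))))) = fB x := by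
  by_cases h1 : [false,true,true,false,true] <+: x
  · obtain ⟨t, rfl⟩ := h1
    show fA (fB (fA (fB (fB (fA (true::false::true::true::false::true::t)))))) = _
    rw [show fA (fB (fA (fB (fB (fA (true::false::true::true::false::true::t))))))
          = true::false::true::true::fC t from rfl]
    rw [fC_default (fun hp => by obtain ⟨v, rfl⟩ := hp; exact hx.1 ⟨[false,true,true], v, rfl⟩)
        (fun hp => by obtain ⟨v, rfl⟩ := hp; exact hx.2 ⟨[false,true,true], v, rfl⟩)]
    rfl
  by_cases h2 : [false,true,true,true] <+: x
  · obtain ⟨t, rfl⟩ := h2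
    show fA (fB (fA (fB (fB (fA (true::false::true::true::true::t)))))) = _
    rw [show fA (fB (fA (fB (fB (fA (true::false::true::true::true::t))))))
          = true::false::true::true::fC (false::true::true::fC t) from rfl]
    rw [dagger t hx.tail.tail.tail.tail]
    rfl
  · have e2 : fA (true::x) = false::true::x :=
      fA_default
        (fun hp => by obtain ⟨v, hv⟩ := hp; injection hv with _ h'; exact h1 ⟨v, h'⟩)
        (fun hp => by obtain ⟨v, hv⟩ := hp; injection hv with _ h'; exact h2 ⟨v, h'⟩)
    show fA (fB (fA (fB (fB (fA (true::x)))))) = true::x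
    rw [e2]
    rfl

end S17


namespace S17

def X : Type := {l : LB // Normal l}

def gA : Function.End X := fun x => ⟨fA x.1, normal_fA x.2⟩
def gB : Function.End X := fun x => ⟨fB x.1, normal_fB x.2⟩

def phi : FreeSemigroup (Fin 2) →ₙ* Function.End X :=
  FreeSemigroup.lift (fun i => if i = 0 then gA else gB)

lemma phi_a : phi wa = gA := by simp [phi, wa]

lemma phi_b : phi wb = gB := by
  have : ((1 : Fin 2) = 0) = False := by simp
  simp [phi, wb]

lemma phi_rel : phi (wa * wb * wa * wb * wb * wa * wb) = phi wb := by
  simp only [map_mul, phi_a, phi_b]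
  funext x
  exact Subtype.ext (key x.1 x.2)

lemma normal_nil : Normal ([] : LB) := by
  constructor <;> rintro ⟨s, t, h⟩ <;> simp [r1, r2] at h

end S17

/-- In the one-relation semigroup `⟨a, b | abab²ab = b⟩` the images of the words
`ab²a²b²` and `b` are distinct. -/
theorem stmt_17 :
    (↑(wa * wb * wb * wa * wa * wb * wb) : rel.Quotient) ≠ ↑wb := by
  intro h
  have hle : rel ≤ Con.ker S17.phi :=
    Con.conGen_le.mpr fun x y hxy => by
      obtain ⟨rfl, rfl⟩ := hxy
      exact S17.phi_rel
  have h3 : S17.phi (wa * wb * wb * wa * wa * wb * wb) = S17.phi wb :=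
    Con.le_def.mp hle ((Con.eq rel).mp h)
  have h4 : (S17.gA * S17.gB * S17.gB * S17.gA * S17.gA * S17.gB * S17.gB) = S17.gB := by
    simpa only [map_mul, S17.phi_a, S17.phi_b] using h3
  have h5 := congrArg (fun f : Function.End S17.X => (f ⟨[], S17.normal_nil⟩).val) h4
  exact absurd h5 (by decide)
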